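/- The importance weighted ELBO using the equal-weight mixture proposal q̄ = (1/S)∑_s q_s is monotonically non-decreasing in the number of importance samples: for all L ≥ 1, 𝓛^{L+1} ≥ 𝓛^L, where 𝓛^L = E_{z_1,...,z_L iid ∼ q̄}[ log( (1/L)∑_ℓ p(x, z_ℓ)/q̄(z_ℓ) ) ]. -/
import Mathlib


open MeasureTheory Real
open scoped BigOperators

/-- The importance weighted ELBO with proposal `q` and joint density `p(x, ·)`, using `L`
i.i.d. importance samples. -/
noncomputable def iwelbo {α : Type*} [MeasurableSpace α] (μ : Measure α)
    (q p : α → ℝ) (L : ℕ) : ℝ :=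
  ∫ zs : Fin L → α,
    (∏ ℓ, q (zs ℓ)) * Real.log ((1 / (L : ℝ)) * ∑ ℓ, p (zs ℓ) / q (zs ℓ))
    ∂(Measure.pi fun _ : Fin L => μ)

/-- Pointwise (algebraic) key inequality: the average over `k` of the logs of the
`L`-sample averages omitting index `k` is dominated by the log of the `L+1`-sample
average (after multiplying by a nonnegative density factor `D`). -/
lemma iwelbo_aux_pointwise {L : ℕ} (hL : 1 ≤ L) (D : ℝ) (hD : 0 ≤ D)
    (w : Fin (L + 1) → ℝ) (hw : D ≠ 0 → ∀ ℓ, 0 < w ℓ) :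
    (1 / ((L : ℝ) + 1)) * ∑ k : Fin (L + 1),
        D * Real.log ((1 / (L : ℝ)) * ∑ j : Fin L, w (k.succAbove j))
      ≤ D * Real.log ((1 / ((L : ℝ) + 1)) * ∑ ℓ, w ℓ) := by
  rcases eq_or_ne D 0 with h0 | h0
  · simp [h0]
  have hDpos : 0 < D := hD.lt_of_ne (Ne.symm h0)
  have hwpos := hw h0
  haveI : Nonempty (Fin L) := Fin.pos_iff_nonempty.1 hL
  have hL0 : (0 : ℝ) < L := by exact_mod_cast hL
  have ha : ∀ k : Fin (L + 1), 0 < (1 / (L : ℝ)) * ∑ j : Fin L, w (k.succAbove j) := by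
    intro k
    exact mul_pos (by positivity) (Finset.sum_pos (fun j _ => hwpos _) Finset.univ_nonempty)
  have hsum : (∑ k : Fin (L + 1), (1 / (L : ℝ)) * ∑ j : Fin L, w (k.succAbove j))
      = ∑ ℓ, w ℓ := by
    have h1 : ∀ k : Fin (L + 1), (∑ j : Fin L, w (k.succAbove j)) = (∑ ℓ, w ℓ) - w k := by
      intro k
      have h := Fin.sum_univ_succAbove w k
      linarith
    calc (∑ k : Fin (L + 1), (1 / (L : ℝ)) * ∑ j : Fin L, w (k.succAbove j))
        = ∑ k : Fin (L + 1), (1 / (L : ℝ)) * ((∑ ℓ, w ℓ) - w k) :=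
          Finset.sum_congr rfl fun k _ => by rw [h1]
      _ = (1 / (L : ℝ)) * ∑ k : Fin (L + 1), ((∑ ℓ, w ℓ) - w k) := by rw [Finset.mul_sum]
      _ = (1 / (L : ℝ)) * (((L : ℝ) + 1) * (∑ ℓ, w ℓ) - ∑ ℓ, w ℓ) := by
          rw [Finset.sum_sub_distrib, Finset.sum_const, Finset.card_univ, Fintype.card_fin,
            nsmul_eq_mul]
          push_cast
          ring_nf
      _ = ∑ ℓ, w ℓ := by field_simp; ring
  have hjen : (∑ k : Fin (L + 1),
        (1 / ((L : ℝ) + 1)) * Real.log ((1 / (L : ℝ)) * ∑ j : Fin L, w (k.succAbove j)))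
      ≤ Real.log ((1 / ((L : ℝ) + 1)) *
          ∑ k : Fin (L + 1), (1 / (L : ℝ)) * ∑ j : Fin L, w (k.succAbove j)) := by
    have hcard : (∑ _k : Fin (L + 1), (1 / ((L : ℝ) + 1))) = 1 := by
      rw [Finset.sum_const, Finset.card_univ, Fintype.card_fin, nsmul_eq_mul]
      push_cast
      field_simp
    have h := strictConcaveOn_log_Ioi.concaveOn.le_map_sum
      (t := Finset.univ) (w := fun _ : Fin (L + 1) => (1 / ((L : ℝ) + 1)))
      (p := fun k : Fin (L + 1) => (1 / (L : ℝ)) * ∑ j : Fin L, w (k.succAbove j))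
      (fun i _ => by positivity) hcard (fun i _ => ha i)
    simpa [smul_eq_mul, Finset.mul_sum] using h
  calc (1 / ((L : ℝ) + 1)) * ∑ k : Fin (L + 1),
        D * Real.log ((1 / (L : ℝ)) * ∑ j : Fin L, w (k.succAbove j))
      = D * ∑ k : Fin (L + 1),
          (1 / ((L : ℝ) + 1)) * Real.log ((1 / (L : ℝ)) * ∑ j : Fin L, w (k.succAbove j)) := by
        rw [Finset.mul_sum, Finset.mul_sum]
        exact Finset.sum_congr rfl fun k _ => by ring
    _ ≤ D * Real.log ((1 / ((L : ℝ) + 1)) *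
          ∑ k : Fin (L + 1), (1 / (L : ℝ)) * ∑ j : Fin L, w (k.succAbove j)) :=
        mul_le_mul_of_nonneg_left hjen hD
    _ = D * Real.log ((1 / ((L : ℝ) + 1)) * ∑ ℓ, w ℓ) := by rw [hsum]

set_option maxHeartbeats 1000000 in
/-- Monotonicity of the IWELBO for a general (nonnegative, integrable, normalized)
proposal density `Q`. -/
theorem iwelbo_monotone_aux {α : Type*} [MeasurableSpace α] (μ : Measure α) [SigmaFinite μ]
    (Q p : α → ℝ) (hQ_nonneg : ∀ z, 0 ≤ Q z) (hQ_int : Integrable Q μ)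
    (hQ_prob : ∫ z, Q z ∂μ = 1)
    (h_supp : ∀ z, 0 < Q z → 0 < p z)
    (h_int : ∀ L : ℕ, Integrable (fun zs : Fin L → α =>
        (∏ ℓ, Q (zs ℓ)) * Real.log ((1 / (L : ℝ)) * ∑ ℓ, p (zs ℓ) / Q (zs ℓ)))
      (Measure.pi fun _ : Fin L => μ)) :
    ∀ L : ℕ, 1 ≤ L → iwelbo μ Q p L ≤ iwelbo μ Q p (L + 1) := by
  intro L hL
  have key : ∀ k : Fin (L + 1),
      Integrable (fun zs : Fin (L + 1) → α =>
        (∏ ℓ, Q (zs ℓ)) *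
          Real.log ((1 / (L : ℝ)) * ∑ j : Fin L, p (zs (k.succAbove j)) / Q (zs (k.succAbove j))))
        (Measure.pi fun _ : Fin (L + 1) => μ) ∧
      (∫ zs : Fin (L + 1) → α,
        (∏ ℓ, Q (zs ℓ)) *
          Real.log ((1 / (L : ℝ)) * ∑ j : Fin L, p (zs (k.succAbove j)) / Q (zs (k.succAbove j)))
        ∂(Measure.pi fun _ : Fin (L + 1) => μ)) = iwelbo μ Q p L := by
    intro k
    have mp := measurePreserving_piFinSuccAbove (fun _ : Fin (L + 1) => μ) k
    have hTG : (fun zs : Fin (L + 1) → α =>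
        (∏ ℓ, Q (zs ℓ)) *
          Real.log ((1 / (L : ℝ)) * ∑ j : Fin L, p (zs (k.succAbove j)) / Q (zs (k.succAbove j))))
        = fun zs => (fun z : α × (Fin L → α) => Q z.1 *
            ((∏ ℓ, Q (z.2 ℓ)) * Real.log ((1 / (L : ℝ)) * ∑ ℓ, p (z.2 ℓ) / Q (z.2 ℓ))))
          ((MeasurableEquiv.piFinSuccAbove (fun _ : Fin (L + 1) => α) k) zs) := by
      funext zs
      show (∏ ℓ, Q (zs ℓ)) *
          Real.log ((1 / (L : ℝ)) * ∑ j : Fin L, p (zs (k.succAbove j)) / Q (zs (k.succAbove j)))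
        = Q (zs k) * ((∏ j : Fin L, Q (zs (k.succAbove j))) *
            Real.log ((1 / (L : ℝ)) * ∑ j : Fin L, p (zs (k.succAbove j)) / Q (zs (k.succAbove j))))
      rw [Fin.prod_univ_succAbove (fun ℓ => Q (zs ℓ)) k]
      ring
    have hG_int : Integrable (fun z : α × (Fin L → α) => Q z.1 *
          ((∏ ℓ, Q (z.2 ℓ)) * Real.log ((1 / (L : ℝ)) * ∑ ℓ, p (z.2 ℓ) / Q (z.2 ℓ))))
        (μ.prod (Measure.pi fun _ : Fin L => μ)) :=
      hQ_int.mul_prod (h_int L)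
    constructor
    · rw [hTG]
      exact (mp.integrable_comp_emb
        (MeasurableEquiv.piFinSuccAbove (fun _ : Fin (L + 1) => α) k).measurableEmbedding).2 hG_int
    · rw [hTG]
      have h2 := mp.integral_comp
        (MeasurableEquiv.piFinSuccAbove (fun _ : Fin (L + 1) => α) k).measurableEmbedding
        (fun z : α × (Fin L → α) => Q z.1 *
          ((∏ ℓ, Q (z.2 ℓ)) * Real.log ((1 / (L : ℝ)) * ∑ ℓ, p (z.2 ℓ) / Q (z.2 ℓ))))
      refine h2.trans ?_
      rw [integral_prod_mul Q
        (fun b : Fin L → α =>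
          (∏ ℓ, Q (b ℓ)) * Real.log ((1 / (L : ℝ)) * ∑ ℓ, p (b ℓ) / Q (b ℓ)))]
      rw [hQ_prob, one_mul]
      rfl
  have pointwise : ∀ zs : Fin (L + 1) → α,
      (1 / ((L : ℝ) + 1)) * ∑ k : Fin (L + 1),
          (∏ ℓ, Q (zs ℓ)) *
            Real.log ((1 / (L : ℝ)) *
              ∑ j : Fin L, p (zs (k.succAbove j)) / Q (zs (k.succAbove j)))
        ≤ (∏ ℓ, Q (zs ℓ)) *
            Real.log ((1 / ((L : ℝ) + 1)) * ∑ ℓ, p (zs ℓ) / Q (zs ℓ)) := by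
    intro zs
    refine iwelbo_aux_pointwise hL (∏ ℓ, Q (zs ℓ))
      (Finset.prod_nonneg fun ℓ _ => hQ_nonneg _) (fun ℓ => p (zs ℓ) / Q (zs ℓ)) ?_
    intro hD ℓ
    have hQz : 0 < Q (zs ℓ) := by
      rcases (hQ_nonneg (zs ℓ)).lt_or_eq with h | h
      · exact h
      · exact absurd (Finset.prod_eq_zero (Finset.mem_univ ℓ) h.symm) hD
    exact div_pos (h_supp _ hQz) hQz
  have hg_int : Integrable (fun zs : Fin (L + 1) → α =>
      (1 / ((L : ℝ) + 1)) * ∑ k : Fin (L + 1),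
        (∏ ℓ, Q (zs ℓ)) *
          Real.log ((1 / (L : ℝ)) *
            ∑ j : Fin L, p (zs (k.succAbove j)) / Q (zs (k.succAbove j))))
      (Measure.pi fun _ : Fin (L + 1) => μ) :=
    (integrable_finset_sum Finset.univ fun k _ => (key k).1).const_mul _
  have hf_int := h_int (L + 1)
  simp only [Nat.cast_add, Nat.cast_one] at hf_int
  have hmono := integral_mono hg_int hf_int pointwise
  have hL1 : ((L : ℝ) + 1) ≠ 0 := by positivity
  unfold iwelbo
  simp only [Nat.cast_add, Nat.cast_one]
  refine le_trans (le_of_eq ?_) hmono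
  rw [integral_const_mul, integral_finset_sum Finset.univ fun k _ => (key k).1,
    Finset.sum_congr rfl fun k _ => (key k).2, Finset.sum_const, Finset.card_univ,
    Fintype.card_fin, nsmul_eq_mul, Nat.cast_add, Nat.cast_one,
    ← mul_assoc, one_div_mul_cancel hL1, one_mul]
  rfl

/-- The importance weighted ELBO using the equal-weight mixture proposal
`q̄ = (1/S) ∑ s, q s` is monotonically non-decreasing in the number of importance
samples: for all `L ≥ 1`, `𝓛^{L+1} ≥ 𝓛^L`. -/
theorem iwelbo_mixture_monotone
    {α : Type*} [MeasurableSpace α] (μ : Measure α) [SigmaFinite μ]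
    (S : ℕ) (hS : 0 < S) (q : Fin S → α → ℝ) (p : α → ℝ)
    (hq_meas : ∀ s, Measurable (q s))
    (hq_nonneg : ∀ s z, 0 ≤ q s z)
    (hq_prob : ∀ s, ∫ z, q s z ∂μ = 1)
    (hp_meas : Measurable p) (hp_nonneg : ∀ z, 0 ≤ p z)
    -- the support of the mixture is contained in the support of the posterior
    (h_supp : ∀ z, p z = 0 → (1 / (S : ℝ)) * ∑ j, q j z = 0)
    (h_int : ∀ L : ℕ, Integrable
      (fun zs : Fin L → α =>
        (∏ ℓ, ((1 / (S : ℝ)) * ∑ j, q j (zs ℓ))) *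
          Real.log ((1 / (L : ℝ)) * ∑ ℓ, p (zs ℓ) / ((1 / (S : ℝ)) * ∑ j, q j (zs ℓ))))
      (Measure.pi fun _ : Fin L => μ)) :
    ∀ L : ℕ, 1 ≤ L →
      iwelbo μ (fun z => (1 / (S : ℝ)) * ∑ j, q j z) p L
        ≤ iwelbo μ (fun z => (1 / (S : ℝ)) * ∑ j, q j z) p (L + 1) := by
  have hq_int : ∀ s, Integrable (q s) μ := by
    intro s
    by_contra h
    have h1 := hq_prob s
    rw [integral_undef h] at h1
    exact one_ne_zero h1.symm
  have hQ_int : Integrable (fun z => (1 / (S : ℝ)) * ∑ j, q j z) μ :=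
    (integrable_finset_sum Finset.univ fun j _ => hq_int j).const_mul _
  have hQ_prob : (∫ z, (1 / (S : ℝ)) * ∑ j, q j z ∂μ) = 1 := by
    rw [integral_const_mul, integral_finset_sum Finset.univ fun j _ => hq_int j]
    simp only [hq_prob, Finset.sum_const, Finset.card_univ, Fintype.card_fin, nsmul_eq_mul,
      mul_one]
    have hS0 : (S : ℝ) ≠ 0 := by positivity
    field_simp
  refine iwelbo_monotone_aux μ _ p
    (fun z => mul_nonneg (by positivity) (Finset.sum_nonneg fun j _ => hq_nonneg j z))
    hQ_int hQ_prob ?_ h_int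
  intro z hz
  rcases (hp_nonneg z).lt_or_eq with h | h
  · exact h
  · exact absurd (h_supp z h.symm) hz.ne'
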